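/- arXiv:2504.11979 — 3 statements merged into one kernel-verified Lean document; each statement's English description precedes it below -/
import Mathlib

section
/- Let β ∈ [0,∞] (with the convention exp(−∞) = 0). Let n₀, f : ℕ → ℕ satisfy n₀(n) → ∞ and f(n)/√(n₀(n)) → β as n → ∞. For each n let λ_n be a random 1-CNF formula with f(n) clauses and n₀(n) variables. Then P(λ_n ∈ SAT) → exp(−(β/2)²) as n → ∞. -/
open Filter Topology Finset
open scoped ENNReal Classical

namespace RandomSAT

/-- Data of a random `k`-clause on `n` variables: a sequence of `k` pairwise distinct
variables together with `k` signs. -/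
def ClauseData (n k : ℕ) : Type :=
  {p : (Fin k → Fin n) × (Fin k → Bool) // Function.Injective p.1}

instance (n k : ℕ) : Fintype (ClauseData n k) := by
  unfold ClauseData; infer_instance

instance (n k : ℕ) : DecidableEq (ClauseData n k) := by
  unfold ClauseData; infer_instance

/-- The `i`-th literal of a clause, as a nonzero integer in `±[n]`
(`σ_i · v_i`, variables being `1,…,n`). -/
def lit {n k : ℕ} (c : ClauseData n k) (i : Fin k) : ℤ :=
  (if c.1.2 i then 1 else -1) * ((c.1.1 i : ℤ) + 1)

/-- Clause satisfaction at an assignment `x : ℤ → Bool` (`true` = 1, `false` = -1):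
some literal of the clause is satisfied, i.e. `σ_i · x_{v_i} = 1` for some `i`. -/
def ClauseSat {n k : ℕ} (c : ClauseData n k) (x : ℤ → Bool) : Prop :=
  ∃ i, x ((c.1.1 i : ℤ) + 1) = c.1.2 i

/-- The set `±[n] = {-n,…,-1,1,…,n}` of literals. -/
noncomputable def pm (n : ℕ) : Finset ℤ := (Finset.Icc (-(n : ℤ)) (n : ℤ)).erase 0

/-- A set of literals is consistent if it contains at most one of `v`, `-v` for each `v`. -/
def Consistent (L : Finset ℤ) : Prop := ∀ l ∈ L, -l ∉ L

/-- `x` fixes the variables dictated by `L`: `x_{|l|} = sgn l` for every `l ∈ L`. -/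
def Fixes (L : Finset ℤ) (x : ℤ → Bool) : Prop :=
  ∀ l ∈ L, x |l| = decide (0 < l)

/-- A `k`-CNF formula with `m` clauses on `n` variables (an outcome of the random formula:
the joint distribution of the i.i.d. uniform clauses is uniform on this space). -/
abbrev CNF (n m k : ℕ) := Fin m → ClauseData n k

/-- `φ(x) = 1`: all clauses are satisfied at `x`. -/
def CNFSat {n m k : ℕ} (φ : CNF n m k) (x : ℤ → Bool) : Prop :=
  ∀ j, ClauseSat (φ j) x

/-- `φ_L ∈ SAT`: some assignment fixing the variables dictated by `L` satisfies `φ`. -/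
def SATFixed {n m k : ℕ} (L : Finset ℤ) (φ : CNF n m k) : Prop :=
  ∃ x, Fixes L x ∧ CNFSat φ x

/-- Probability of an event under the uniform distribution on a finite sample space. -/
noncomputable def prob {Ω : Type*} [Fintype Ω] (A : Set Ω) : ℝ :=
  (Nat.card A : ℝ) / (Fintype.card Ω : ℝ)


/-! auxiliary -/

variable {n m : ℕ}

def var (c : ClauseData n 1) : Fin n := c.1.1 0
def sgn (c : ClauseData n 1) : Bool := c.1.2 0

def mkC (v : Fin n) (s : Bool) : ClauseData n 1 :=
  ⟨(fun _ => v, fun _ => s), fun a b _ => Subsingleton.elim a b⟩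

@[simp] lemma var_mkC (v : Fin n) (s : Bool) : var (mkC v s) = v := rfl
@[simp] lemma sgn_mkC (v : Fin n) (s : Bool) : sgn (mkC v s) = s := rfl

lemma clause_ext (c : ClauseData n 1) : c = mkC (var c) (sgn c) := by
  apply Subtype.ext
  refine Prod.ext (funext fun i => ?_) (funext fun i => ?_) <;>
    · rw [Subsingleton.elim i 0]; rfl

lemma clause_eq_of (c c' : ClauseData n 1) (h1 : var c = var c') (h2 : sgn c = sgn c') :
    c = c' := by rw [clause_ext c, clause_ext c', h1, h2]

lemma card_clause (n : ℕ) : Fintype.card (ClauseData n 1) = 2 * n := by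
  have e : ClauseData n 1 ≃ Fin n × Bool :=
    { toFun := fun c => (var c, sgn c)
      invFun := fun p => mkC p.1 p.2
      left_inv := fun c => (clause_ext c).symm
      right_inv := fun p => rfl }
  rw [Fintype.card_congr e]
  simp [Fintype.card_prod, mul_comm]

def Con (φ : CNF n m 1) : Prop :=
  ∀ j j', var (φ j) = var (φ j') → sgn (φ j) = sgn (φ j')

lemma sat_iff_con (φ : CNF n m 1) : (∃ x, CNFSat φ x) ↔ Con φ := by
  constructor
  · rintro ⟨x, hx⟩ j j' hv
    obtain ⟨i, hi⟩ := hx j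
    obtain ⟨i', hi'⟩ := hx j'
    rw [Subsingleton.elim i 0] at hi
    rw [Subsingleton.elim i' 0] at hi'
    have hv' : (φ j).1.1 0 = (φ j').1.1 0 := hv
    show (φ j).1.2 0 = (φ j').1.2 0
    rw [← hi, ← hi', hv']
  · intro hc
    refine ⟨fun z => decide (∃ j, ((var (φ j) : ℤ) + 1 = z) ∧ sgn (φ j) = true), fun j => ?_⟩
    refine ⟨0, ?_⟩
    show decide _ = sgn (φ j)
    cases hs : sgn (φ j) with
    | true =>
        simp only [decide_eq_true_eq]
        exact ⟨j, rfl, hs⟩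
    | false =>
        simp only [decide_eq_false_iff_not]
        rintro ⟨j', hvj, hsj⟩
        have hv : var (φ j') = var (φ j) := by
          have hvj' : ((var (φ j') : ℤ)) + 1 = ((var (φ j) : ℤ)) + 1 := hvj
          have h2 : ((var (φ j') : ℤ)) = ((var (φ j) : ℤ)) := by omega
          have h3 : ((var (φ j')).val : ℤ) = ((var (φ j)).val : ℤ) := h2
          exact Fin.val_injective (by exact_mod_cast h3)
        have := hc j' j hv
        rw [hsj, hs] at this
        exact Bool.true_eq_false.mp this

noncomputable def satF (n m : ℕ) : Finset (CNF n m 1) := univ.filter (fun φ => Con φ)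

noncomputable def A (n m : ℕ) : ℕ := (satF n m).card

def D (φ : CNF n m 1) : ℕ := (univ.image (fun j => var (φ j))).card

lemma prob_eq (n m : ℕ) :
    prob {lam : CNF n m 1 | ∃ x, CNFSat lam x} = (A n m : ℝ) / ((2*n : ℝ))^m := by
  unfold prob
  have h1 : Nat.card {lam : CNF n m 1 | ∃ x, CNFSat lam x} = A n m := by
    rw [Nat.card_eq_fintype_card]
    rw [Fintype.card_subtype]
    unfold A satF
    congr 1
    apply Finset.filter_congr
    intro φ _
    simp [sat_iff_con]
  have h2 : (Fintype.card (CNF n m 1) : ℝ) = ((2*n : ℝ))^m := by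
    rw [Fintype.card_fun, card_clause, Fintype.card_fin]
    push_cast; ring
  rw [h1, h2]



/-! recursion -/

def compat (ψ : CNF n m 1) (c : ClauseData n 1) : Prop :=
  ∀ j, var (ψ j) = var c → sgn (ψ j) = sgn c

lemma con_cons (ψ : CNF n m 1) (c : ClauseData n 1) :
    Con (Fin.cons c ψ : CNF n (m+1) 1) ↔ Con ψ ∧ compat ψ c := by
  constructor
  · intro H
    refine ⟨fun j j' h => ?_, fun j h => ?_⟩
    · have := H j.succ j'.succ
      simpa [Fin.cons_succ] using this (by simpa [Fin.cons_succ] using h)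
    · have := H j.succ 0
      simpa [Fin.cons_succ, Fin.cons_zero] using this (by simpa [Fin.cons_succ, Fin.cons_zero] using h)
  · rintro ⟨h1, h2⟩ j j'
    induction j using Fin.cases with
    | zero =>
      induction j' using Fin.cases with
      | zero => intro _; rfl
      | succ j' =>
        intro h
        simp only [Fin.cons_zero, Fin.cons_succ] at *
        exact (h2 j' h.symm).symm
    | succ j =>
      induction j' using Fin.cases with
      | zero =>
        intro h
        simp only [Fin.cons_zero, Fin.cons_succ] at *
        exact h2 j h
      | succ j' =>
        intro h
        simp only [Fin.cons_succ] at *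
        exact h1 j j' h

lemma A_rec (n m : ℕ) :
    A n (m+1) = ∑ ψ ∈ satF n m, (univ.filter (fun c => compat ψ c)).card := by
  classical
  unfold A
  have hcard : satF n (m+1) =
      (univ.filter (fun p : ClauseData n 1 × CNF n m 1 => Con p.2 ∧ compat p.2 p.1)).image
        (fun p => (Fin.cons p.1 p.2 : CNF n (m+1) 1)) := by
    ext φ
    simp only [satF, mem_filter, mem_univ, true_and, mem_image]
    constructor
    · intro h
      refine ⟨(φ 0, fun j => φ j.succ), ?_, ?_⟩
      · have : (Fin.cons (φ 0) (fun j => φ j.succ) : CNF n (m+1) 1) = φ := by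
          funext i; exact Fin.cases rfl (fun j => rfl) i
        rw [← con_cons] ; rw [this]; exact h
      · funext i; exact Fin.cases rfl (fun j => rfl) i
    · rintro ⟨p, hp, rfl⟩
      exact (con_cons _ _).mpr ⟨hp.1, hp.2⟩
  rw [hcard, Finset.card_image_of_injOn]
  · rw [Finset.card_eq_sum_card_fiberwise
      (f := fun p : ClauseData n 1 × CNF n m 1 => p.2) (t := satF n m)]
    · apply Finset.sum_congr rfl
      intro ψ hψ
      apply Finset.card_bij (fun p _ => p.1)
      · intro p hp
        simp only [mem_filter, mem_univ, true_and] at hp ⊢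
        rw [hp.2] at hp
        exact hp.1.2
      · intro p hp q hq h
        simp only [mem_filter, mem_univ, true_and] at hp hq
        exact Prod.ext h (hp.2.trans hq.2.symm)
      · intro c hc
        simp only [mem_filter, mem_univ, true_and] at hc ⊢
        simp only [satF, mem_filter, mem_univ, true_and] at hψ
        exact ⟨(c, ψ), ⟨⟨hψ, hc⟩, rfl⟩, rfl⟩
    · intro p hp
      simp only [Finset.mem_coe, mem_filter, mem_univ, true_and] at hp
      simp only [Finset.mem_coe, satF, mem_filter, mem_univ, true_and]
      exact hp.1
  · intro p hp q hq h
    have h0 : p.1 = q.1 := by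
      have := congrFun h 0; simpa [Fin.cons_zero] using this
    have h1 : p.2 = q.2 := by
      funext j
      have := congrFun h j.succ; simpa [Fin.cons_succ] using this
    exact Prod.ext h0 h1

lemma card_compat {ψ : CNF n m 1} (hψ : Con ψ) :
    (univ.filter (fun c => compat ψ c)).card = 2*n - D ψ := by
  classical
  have hbad : (univ.filter (fun c => ¬ compat ψ c)).card = D ψ := by
    unfold D
    apply Finset.card_bij (fun c _ => var c)
    · intro c hc
      have hc : ¬ compat ψ c := (mem_filter.mp hc).2
      simp only [compat] at hc
      push_neg at hc
      obtain ⟨j, hj, _⟩ := hc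
      exact mem_image.mpr ⟨j, mem_univ j, hj⟩
    · intro c hc c' hc' h
      have hc : ¬ compat ψ c := (mem_filter.mp hc).2
      have hc' : ¬ compat ψ c' := (mem_filter.mp hc').2
      simp only [compat] at hc hc'
      push_neg at hc hc'
      obtain ⟨j, hj, hsj⟩ := hc
      obtain ⟨j', hj', hsj'⟩ := hc'
      apply clause_eq_of _ _ h
      have : var (ψ j) = var (ψ j') := by rw [hj, hj', h]
      have hss := hψ j j' this
      have e1 : sgn c = !(sgn (ψ j)) := by
        cases hb : sgn (ψ j) <;> cases hb' : sgn c <;> simp_all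
      have e2 : sgn c' = !(sgn (ψ j')) := by
        cases hb : sgn (ψ j') <;> cases hb' : sgn c' <;> simp_all
      rw [e1, e2, hss]
    · intro v hv
      obtain ⟨j, _, hj⟩ := mem_image.mp hv
      refine ⟨mkC v (!(sgn (ψ j))), ?_, by simp⟩
      refine mem_filter.mpr ⟨mem_univ _, ?_⟩
      simp only [compat]
      push_neg
      exact ⟨j, by simp [hj], by simp⟩
  have htot := Finset.card_filter_add_card_filter_not
    (s := (univ : Finset (ClauseData n 1))) (p := fun c => compat ψ c)
  rw [Finset.card_univ, card_clause] at htot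
  omega

lemma D_le_n (φ : CNF n m 1) : D φ ≤ n := by
  have := Finset.card_le_univ (univ.image (fun j => var (φ j)))
  simpa [Finset.card_univ, D] using this

lemma D_le_m (φ : CNF n m 1) : D φ ≤ m := by
  have := Finset.card_image_le (s := (univ : Finset (Fin m))) (f := fun j => var (φ j))
  simpa [D] using this

lemma A_rec' (n m : ℕ) : A n (m+1) = ∑ ψ ∈ satF n m, (2*n - D ψ) := by
  rw [A_rec]
  apply Finset.sum_congr rfl
  intro ψ hψ
  exact card_compat (by simpa [satF] using hψ)

lemma A_zero (n : ℕ) : A n 0 = 1 := by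
  unfold A satF
  have : ∀ φ : CNF n 0 1, Con φ := fun φ j => j.elim0
  rw [Finset.filter_true_of_mem (fun φ _ => this φ), Finset.card_univ]
  simp [Fintype.card_fun]



/-! K4 bound -/

lemma two_mul_le_two_pow : ∀ r : ℕ, 1 ≤ r → 2 * r ≤ 2 ^ r := by
  intro r
  induction r with
  | zero => omega
  | succ k ih =>
    intro _
    rcases Nat.eq_zero_or_pos k with hk | hk
    · subst hk; simp
    · have h1 := ih hk
      have h2 : 2 ≤ 2 ^ k := by
        calc 2 = 2*1 := by ring
        _ ≤ 2 * k := by omega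
        _ ≤ 2^k := h1
      rw [pow_succ]
      omega

lemma pow_mul_sub_le (d m : ℕ) : 2 * (2 ^ d * (m - d)) ≤ 2 ^ m := by
  rcases le_or_gt m d with h | h
  · have h0 : m - d = 0 := by omega
    rw [h0]
    simpa using Nat.one_le_two_pow (n := m)
  · have hr : 1 ≤ m - d := by omega
    calc 2 * (2^d * (m-d)) = 2^d * (2*(m-d)) := by ring
    _ ≤ 2^d * 2^(m-d) := Nat.mul_le_mul_left _ (two_mul_le_two_pow _ hr)
    _ = 2^m := by rw [← pow_add]; congr 1; omega

lemma fiber_card_le (v : Fin m → Fin n) :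
    ((satF n m).filter (fun ψ => (fun j => var (ψ j)) = v)).card ≤ 2 ^ (univ.image v).card := by
  classical
  have hpick : ∀ i : ↥(univ.image v), ∃ j : Fin m, v j = (i : Fin n) := by
    intro i
    obtain ⟨j, _, hj⟩ := mem_image.mp i.2
    exact ⟨j, hj⟩
  choose pick hpick' using hpick
  have hle := Finset.card_le_card_of_injOn
    (s := (satF n m).filter (fun ψ => (fun j => var (ψ j)) = v))
    (t := (univ : Finset (↥(univ.image v) → Bool)))
    (fun ψ => fun i => sgn (ψ (pick i))) (fun ψ _ => mem_univ _) ?_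
  · calc _ ≤ _ := hle
    _ = 2 ^ (univ.image v).card := by
        rw [Finset.card_univ, Fintype.card_fun, Fintype.card_coe, Fintype.card_bool]
  · intro ψ hψ ψ' hψ' h
    simp only [Finset.coe_filter, Set.mem_setOf_eq, satF, mem_filter, mem_univ, true_and] at hψ hψ'
    obtain ⟨hcon, hv⟩ := hψ
    obtain ⟨hcon', hv'⟩ := hψ'
    funext j
    have hvj : var (ψ j) = v j := congrFun hv j
    have hvj' : var (ψ' j) = v j := congrFun hv' j
    apply clause_eq_of _ _ (hvj.trans hvj'.symm)
    set i : ↥(univ.image v) := ⟨v j, mem_image.mpr ⟨j, mem_univ j, rfl⟩⟩ with hi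
    have hpi : v (pick i) = v j := hpick' i
    have e1 : sgn (ψ (pick i)) = sgn (ψ j) :=
      hcon _ _ (by rw [congrFun hv (pick i), hpi, ← hvj])
    have e2 : sgn (ψ' (pick i)) = sgn (ψ' j) :=
      hcon' _ _ (by rw [congrFun hv' (pick i), hpi, ← hvj'])
    rw [← e1, ← e2]
    exact congrFun h i

lemma K4 (n m : ℕ) : 2 * (∑ ψ ∈ satF n m, (m - D ψ)) ≤ (2*n)^m := by
  classical
  have h := Finset.sum_comp (s := satF n m)
    (fun w : Fin m → Fin n => m - (univ.image w).card)
    (fun (ψ : CNF n m 1) (j : Fin m) => var (ψ j))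
  unfold D
  rw [h, Finset.mul_sum]
  calc ∑ b ∈ (satF n m).image (fun ψ j => var (ψ j)),
        2 * (((satF n m).filter (fun ψ => (fun j => var (ψ j)) = b)).card • (m - (univ.image b).card))
      ≤ ∑ _b ∈ (satF n m).image (fun ψ j => var (ψ j)), 2^m := by
        apply Finset.sum_le_sum
        intro b _
        rw [smul_eq_mul]
        calc 2 * (((satF n m).filter (fun ψ => (fun j => var (ψ j)) = b)).card * (m - (univ.image b).card))
            ≤ 2 * (2 ^ (univ.image b).card * (m - (univ.image b).card)) := by
              have := fiber_card_le (n := n) (m := m) b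
              exact Nat.mul_le_mul_left _ (Nat.mul_le_mul_right _ this)
        _ ≤ 2^m := pow_mul_sub_le _ _
    _ = ((satF n m).image (fun ψ j => var (ψ j))).card * 2^m := by
        rw [Finset.sum_const, smul_eq_mul]
    _ ≤ n^m * 2^m := by
        apply Nat.mul_le_mul_right
        calc ((satF n m).image (fun ψ j => var (ψ j))).card
            ≤ Fintype.card (Fin m → Fin n) := by
              simpa [Finset.card_univ] using Finset.card_le_univ ((satF n m).image (fun ψ j => var (ψ j)))
        _ = n^m := by rw [Fintype.card_fun, Fintype.card_fin, Fintype.card_fin]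
    _ = (2*n)^m := by rw [Nat.mul_pow]; ring



/-! probability bounds -/

noncomputable def p (n m : ℕ) : ℝ := (A n m : ℝ) / (2*(n:ℝ))^m

lemma p_eq_prob (n m : ℕ) : prob {lam : CNF n m 1 | ∃ x, CNFSat lam x} = p n m := by
  rw [prob_eq]; rfl

lemma p_nonneg (n m : ℕ) : 0 ≤ p n m := by
  unfold p; positivity

lemma p_zero (n : ℕ) : p n 0 = 1 := by
  unfold p; rw [A_zero]; simp

lemma A_cast (n m : ℕ) :
    (A n (m+1) : ℝ) = ∑ ψ ∈ satF n m, ((2*(n:ℝ)) - D ψ) := by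
  rw [A_rec', Nat.cast_sum]
  apply Finset.sum_congr rfl
  intro ψ _
  have h := D_le_n ψ
  have : D ψ ≤ 2*n := by omega
  push_cast [Nat.cast_sub this]
  ring

section
variable {n : ℕ} (hn : 1 ≤ n)

lemma hN_pos (hn : 1 ≤ n) : (0:ℝ) < 2*(n:ℝ) := by
  have : (1:ℝ) ≤ n := by exact_mod_cast hn
  linarith

lemma p_succ_le (m : ℕ) : p n (m+1) ≤ p n m := by
  rcases Nat.eq_zero_or_pos n with h0 | h0
  · subst h0
    unfold p
    simp [A_cast]
    positivity
  have hN := hN_pos h0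
  have h1 : (A n (m+1) : ℝ) ≤ (2*(n:ℝ)) * A n m := by
    rw [A_cast]
    calc ∑ ψ ∈ satF n m, ((2*(n:ℝ)) - D ψ) ≤ ∑ ψ ∈ satF n m, (2*(n:ℝ)) := by
          apply Finset.sum_le_sum; intro ψ _
          have : (0:ℝ) ≤ D ψ := by positivity
          linarith
    _ = (A n m : ℝ) * (2*(n:ℝ)) := by rw [Finset.sum_const, nsmul_eq_mul]; rfl
    _ = _ := by ring
  unfold p
  rw [pow_succ]
  rw [div_le_div_iff₀ (by positivity) (by positivity)]
  calc (A n (m+1) : ℝ) * (2*(n:ℝ))^m ≤ (2*(n:ℝ)) * A n m * (2*(n:ℝ))^m := by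
        apply mul_le_mul_of_nonneg_right h1 (by positivity)
  _ = (A n m:ℝ) * ((2*(n:ℝ))^m * (2*(n:ℝ))) := by ring

lemma p_low (m : ℕ) (hn : 1 ≤ n) : p n m * (1 - (m:ℝ)/(2*(n:ℝ))) ≤ p n (m+1) := by
  have hN := hN_pos hn
  have h1 : (A n m : ℝ) * (2*(n:ℝ) - m) ≤ A n (m+1) := by
    rw [A_cast]
    calc (A n m : ℝ) * (2*(n:ℝ) - m) = ∑ ψ ∈ satF n m, (2*(n:ℝ) - m) := by
          rw [Finset.sum_const, nsmul_eq_mul]; unfold A; ring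
    _ ≤ ∑ ψ ∈ satF n m, ((2*(n:ℝ)) - D ψ) := by
          apply Finset.sum_le_sum; intro ψ _
          have : (D ψ : ℝ) ≤ m := by exact_mod_cast D_le_m ψ
          linarith
  unfold p
  rw [pow_succ, le_div_iff₀ (by positivity)]
  calc (A n m:ℝ) / (2*(n:ℝ))^m * (1 - (m:ℝ)/(2*(n:ℝ))) * ((2*(n:ℝ))^m * (2*(n:ℝ)))
      = (A n m:ℝ) * (2*(n:ℝ) - m) := by field_simp
  _ ≤ (A n (m+1):ℝ) := h1

lemma p_up (m : ℕ) (hn : 1 ≤ n) :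
    p n (m+1) ≤ p n m * (1 - (m:ℝ)/(2*(n:ℝ))) + 1/(2*(2*(n:ℝ))) := by
  have hN := hN_pos hn
  have hsum : (∑ ψ ∈ satF n m, (↑(m - D ψ) : ℝ)) ≤ (2*(n:ℝ))^m / 2 := by
    have h := K4 n m
    have h' : ((2 * ∑ ψ ∈ satF n m, (m - D ψ) : ℕ) : ℝ) ≤ (((2*n)^m : ℕ) : ℝ) := by
      exact_mod_cast h
    push_cast at h'
    linarith
  have h1 : (A n (m+1) : ℝ) ≤ (A n m : ℝ) * (2*(n:ℝ) - m) + (2*(n:ℝ))^m / 2 := by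
    rw [A_cast]
    have e : ∑ ψ ∈ satF n m, ((2*(n:ℝ)) - D ψ)
        = ∑ ψ ∈ satF n m, ((2*(n:ℝ) - m) + (↑(m - D ψ) : ℝ)) := by
      apply Finset.sum_congr rfl
      intro ψ _
      have hd := D_le_m ψ
      push_cast [Nat.cast_sub hd]
      ring
    rw [e, Finset.sum_add_distrib, Finset.sum_const, nsmul_eq_mul]
    unfold A
    linarith [hsum]
  unfold p
  rw [pow_succ, div_le_iff₀ (by positivity)]
  calc (A n (m+1):ℝ) ≤ (A n m : ℝ) * (2*(n:ℝ) - m) + (2*(n:ℝ))^m / 2 := h1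
  _ = ((A n m:ℝ)/(2*(n:ℝ))^m * (1 - (m:ℝ)/(2*(n:ℝ))) + 1/(2*(2*(n:ℝ)))) * ((2*(n:ℝ))^m * (2*(n:ℝ))) := by
        field_simp


lemma p_bound (hn : 1 ≤ n) :
    ∀ m : ℕ, m ≤ 2*n →
    Real.exp (-(∑ j ∈ Finset.range m, (j:ℝ)/(2*(n:ℝ)))) - (∑ j ∈ Finset.range m, ((j:ℝ)/(2*(n:ℝ)))^2) ≤ p n m
    ∧ p n m ≤ Real.exp (-(∑ j ∈ Finset.range m, (j:ℝ)/(2*(n:ℝ)))) + m/(2*(2*(n:ℝ))) := by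
  have hN := hN_pos hn
  intro m
  induction m with
  | zero => intro _; simp [p_zero]
  | succ m ih =>
    intro hm1
    obtain ⟨IH1, IH2⟩ := ih (by omega)
    set S := ∑ j ∈ Finset.range m, (j:ℝ)/(2*(n:ℝ)) with hSdef
    set Q := ∑ j ∈ Finset.range m, ((j:ℝ)/(2*(n:ℝ)))^2 with hQdef
    set x := (m:ℝ)/(2*(n:ℝ)) with hxdef
    have hsS : ∑ j ∈ Finset.range (m+1), (j:ℝ)/(2*(n:ℝ)) = S + x := by
      rw [Finset.sum_range_succ]
    have hsQ : ∑ j ∈ Finset.range (m+1), ((j:ℝ)/(2*(n:ℝ)))^2 = Q + x^2 := by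
      rw [Finset.sum_range_succ]
    rw [hsS, hsQ]
    have hx0 : 0 ≤ x := by positivity
    have hx1 : x ≤ 1 := by
      rw [hxdef, div_le_one hN]
      have : (m:ℝ) ≤ 2*(n:ℝ) := by exact_mod_cast (by omega : m ≤ 2*n)
      linarith
    have hS0 : 0 ≤ S := Finset.sum_nonneg (fun j _ => by positivity)
    have hQ0 : 0 ≤ Q := Finset.sum_nonneg (fun j _ => by positivity)
    have hexp : Real.exp (-(S + x)) = Real.exp (-S) * Real.exp (-x) := by
      rw [← Real.exp_add]; ring_nf
    have hE0 : 0 < Real.exp (-S) := Real.exp_pos _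
    have hE1 : Real.exp (-S) ≤ 1 := Real.exp_le_one_iff.mpr (by linarith)
    have hex1 : Real.exp (-x) ≤ 1 := Real.exp_le_one_iff.mpr (by linarith)
    have hex0 : 0 < Real.exp (-x) := Real.exp_pos _
    have e1 : 1 - x ≤ Real.exp (-x) := by linarith [Real.add_one_le_exp (-x)]
    have e2 : Real.exp (-x) * (1 + x) ≤ 1 := by
      have h := Real.add_one_le_exp x
      have := mul_le_mul_of_nonneg_left h (le_of_lt hex0)
      rw [← Real.exp_add] at this
      simp at this
      linarith [this]
    constructor
    · -- lower bound
      have hrec := p_low (n := n) m hn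
      by_cases hEQ : Real.exp (-S) - Q ≤ 0
      · have : Real.exp (-(S+x)) ≤ Real.exp (-S) := by
          rw [hexp]
          nlinarith
        have := p_nonneg n (m+1)
        nlinarith
      · push_neg at hEQ
        have step1 : (Real.exp (-S) - Q) * (1 - x) ≤ p n (m+1) := by
          have := mul_le_mul_of_nonneg_right IH1 (by linarith : (0:ℝ) ≤ 1 - x)
          linarith
        have key : Real.exp (-x) * (1 - x^2) ≤ 1 - x := by
          have h3 := mul_le_mul_of_nonneg_right e2 (by linarith : (0:ℝ) ≤ 1 - x)
          nlinarith
        have key2 : Real.exp (-S) * Real.exp (-x) ≤ 1 := by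
          rw [← Real.exp_add]; exact Real.exp_le_one_iff.mpr (by linarith)
        rw [hexp]
        have f1 : Real.exp (-S) * (Real.exp (-x) * (1 - x^2)) ≤ Real.exp (-S) * (1-x) :=
          mul_le_mul_of_nonneg_left key hE0.le
        have f2 : (Real.exp (-S) * Real.exp (-x)) * x^2 ≤ 1 * x^2 :=
          mul_le_mul_of_nonneg_right key2 (sq_nonneg x)
        have expand1 : Real.exp (-S) * (Real.exp (-x) * (1 - x^2))
            = Real.exp (-S) * Real.exp (-x) - (Real.exp (-S) * Real.exp (-x)) * x^2 := by ring
        have expand2 : (Real.exp (-S) - Q)*(1-x)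
            = Real.exp (-S) * (1-x) - Q + Q*x := by ring
        have f3 : 0 ≤ Q*x := mul_nonneg hQ0 hx0
        linarith
    · -- upper bound
      have hrec := p_up (n := n) m hn
      have step1 : p n m * (1-x) ≤ (Real.exp (-S) + m/(2*(2*(n:ℝ)))) * (1-x) := by
        apply mul_le_mul_of_nonneg_right IH2 (by linarith)
      have hm0 : 0 ≤ (m:ℝ)/(2*(2*(n:ℝ))) := by positivity
      rw [← hxdef] at hrec
      rw [hexp]
      push_cast
      have f1 : Real.exp (-S) * (1-x) ≤ Real.exp (-S) * Real.exp (-x) :=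
        mul_le_mul_of_nonneg_left e1 hE0.le
      have f2 : 0 ≤ ((m:ℝ)/(2*(2*(n:ℝ)))) * x := mul_nonneg hm0 hx0
      have expand : (Real.exp (-S) + (m:ℝ)/(2*(2*(n:ℝ)))) * (1-x)
          = Real.exp (-S) * (1-x) + (m:ℝ)/(2*(2*(n:ℝ))) - ((m:ℝ)/(2*(2*(n:ℝ))))*x := by ring
      have last : ((m:ℝ)+1)/(2*(2*(n:ℝ))) = (m:ℝ)/(2*(2*(n:ℝ))) + 1/(2*(2*(n:ℝ))) := by ring
      linarith

lemma sum_range_id_real (m : ℕ) : (∑ j ∈ Finset.range m, (j:ℝ)) = m*((m:ℝ)-1)/2 := by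
  induction m with
  | zero => simp
  | succ k ih =>
    rw [Finset.sum_range_succ, ih]
    push_cast
    ring

lemma p_bound' (m : ℕ) (hn : 1 ≤ n) (hm : m ≤ 2*n) :
    Real.exp (-((m:ℝ)*((m:ℝ)-1)/(4*(n:ℝ)))) - (m:ℝ)^3/(4*(n:ℝ)^2) ≤ p n m ∧
    p n m ≤ Real.exp (-((m:ℝ)*((m:ℝ)-1)/(4*(n:ℝ)))) + (m:ℝ)/(4*(n:ℝ)) := by
  have hN := hN_pos hn
  obtain ⟨h1, h2⟩ := p_bound hn m hm
  have hS : (∑ j ∈ Finset.range m, (j:ℝ)/(2*(n:ℝ))) = (m:ℝ)*((m:ℝ)-1)/(4*(n:ℝ)) := by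
    rw [← Finset.sum_div, sum_range_id_real, div_div]
    ring
  have hQ : (∑ j ∈ Finset.range m, ((j:ℝ)/(2*(n:ℝ)))^2) ≤ (m:ℝ)^3/(4*(n:ℝ)^2) := by
    calc (∑ j ∈ Finset.range m, ((j:ℝ)/(2*(n:ℝ)))^2)
        ≤ ∑ _j ∈ Finset.range m, ((m:ℝ)/(2*(n:ℝ)))^2 := by
          apply Finset.sum_le_sum
          intro j hj
          have hjm : (j:ℝ) ≤ m := by
            exact_mod_cast le_of_lt (Finset.mem_range.mp hj)
          gcongr
      _ = m * ((m:ℝ)/(2*(n:ℝ)))^2 := by rw [Finset.sum_const, nsmul_eq_mul]; simp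
      _ = (m:ℝ)^3/(4*(n:ℝ)^2) := by field_simp; ring
  rw [hS] at h1 h2
  constructor
  · linarith
  · have he : (m:ℝ)/(2*(2*(n:ℝ))) = (m:ℝ)/(4*(n:ℝ)) := by ring
    linarith [he]

lemma p_anti (hn : 1 ≤ n) : Antitone (p n) :=
  antitone_nat_of_succ_le (fun m => p_succ_le m)

end



/-! final assembly -/

lemma exp_neg_le_inv {y : ℝ} (hy : 0 < y) : Real.exp (-y) ≤ 1/y := by
  have h1 : y ≤ Real.exp y := by linarith [Real.add_one_le_exp y]
  rw [Real.exp_neg, one_div]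
  exact inv_anti₀ hy h1

lemma arith_exparg {T R Mv : ℝ} (hT4 : 4 ≤ T) (hR1 : T+1 ≤ R) (hMge : T*R ≤ Mv) :
    T^2/4 - 1 ≤ Mv*(Mv-1)/(4*(R*R)) := by
  have hRpos : (0:ℝ) < R := by linarith
  have h3 : (0:ℝ) < 4*(R*R) := by positivity
  rw [le_div_iff₀ h3]
  have hTRge : (4:ℝ) ≤ T*R := by nlinarith
  have hMpos : (0:ℝ) ≤ Mv + T*R - 1 := by nlinarith
  have h1 : T*R*(T*R-1) ≤ Mv*(Mv-1) := by
    nlinarith [mul_nonneg (sub_nonneg.mpr hMge) hMpos]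
  have h2 : T*R ≤ 4*(R*R) := by nlinarith
  nlinarith

lemma arith_tail {T R Mv ε : ℝ} (hε : 0 < ε) (hT0 : 0 ≤ T) (hR1 : T+1 ≤ R)
    (hRe : (T+1)/(2*ε) + 1 ≤ R) (hMle : Mv < T*R+1) :
    Mv/(4*(R*R)) < ε/2 := by
  have hRpos : (0:ℝ) < R := by linarith
  have h3 : (0:ℝ) < 4*(R*R) := by positivity
  rw [div_lt_iff₀ h3]
  have h2e : (0:ℝ) < 2*ε := by linarith
  have hmul := mul_le_mul_of_nonneg_left hRe h2e.le
  have he : 2*ε*((T+1)/(2*ε) + 1) = (T+1) + 2*ε := by field_simp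
  have hT2e : T+1 < 2*ε*R := by rw [he] at hmul; linarith
  have hstep : (T+1)*R < (2*ε*R)*R := mul_lt_mul_of_pos_right hT2e hRpos
  nlinarith

lemma arith_M2n {T R Mv : ℝ} (hT0 : 0 ≤ T) (hR1 : T+1 ≤ R) (hMle : Mv < T*R+1) :
    Mv ≤ 2*(R*R) := by nlinarith

/-- The random 1-SAT problem. If `n₀(n) → ∞` and `f(n)/√(n₀(n)) → β ∈ [0,∞]`,
then the probability that a random 1-CNF formula with `f n` clauses and `n₀ n` variables is
satisfiable tends to `exp(−(β/2)²)` (with `exp(−∞) = 0`). -/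
theorem random1SAT
    (β : ℝ≥0∞) (n0 f : ℕ → ℕ)
    (hn0 : Tendsto n0 atTop atTop)
    (hβ : Tendsto (fun n => ENNReal.ofReal ((f n : ℝ) / Real.sqrt (n0 n))) atTop (𝓝 β)) :
    Tendsto (fun n => prob {lam : CNF (n0 n) (f n) 1 | ∃ x, CNFSat lam x}) atTop
      (𝓝 (if β = ⊤ then 0 else Real.exp (-(β.toReal / 2) ^ 2))) := by
  have hPeq : (fun n => prob {lam : CNF (n0 n) (f n) 1 | ∃ x, CNFSat lam x})
      = fun n => p (n0 n) (f n) := funext (fun n => p_eq_prob _ _)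
  rw [hPeq]
  set s : ℕ → ℝ := fun k => (f k : ℝ) / Real.sqrt (n0 k) with hsdef
  have hs0 : ∀ k, 0 ≤ s k := fun k => by positivity
  have hnn : Tendsto (fun k => ((n0 k : ℝ))) atTop atTop :=
    tendsto_natCast_atTop_atTop.comp hn0
  have hR : Tendsto (fun k => Real.sqrt (n0 k)) atTop atTop := by
    rw [tendsto_atTop]
    intro M
    filter_upwards [hnn.eventually_ge_atTop (M^2)] with k hk
    calc M ≤ |M| := le_abs_self M
    _ = Real.sqrt (M^2) := (Real.sqrt_sq_eq_abs M).symm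
    _ ≤ Real.sqrt (n0 k) := Real.sqrt_le_sqrt hk
  have hRR : ∀ k, ((n0 k : ℝ)) = Real.sqrt (n0 k) * Real.sqrt (n0 k) :=
    fun k => (Real.mul_self_sqrt (Nat.cast_nonneg _)).symm
  have hev1 : ∀ᶠ k in atTop, 1 ≤ n0 k := hn0.eventually_ge_atTop 1
  have ht : Tendsto (fun k => (Real.sqrt (n0 k))⁻¹) atTop (𝓝 0) :=
    tendsto_inv_atTop_zero.comp hR
  by_cases hT : β = ⊤
  · -- infinite case
    rw [if_pos hT]
    rw [hT] at hβ
    have hsTop : Tendsto s atTop atTop := by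
      rw [tendsto_atTop]
      intro M
      rcases le_or_gt M 0 with hM | hM
      · exact Eventually.of_forall (fun k => le_trans hM (hs0 k))
      · have hev := (ENNReal.tendsto_nhds_top_iff_nnreal.mp hβ) M.toNNReal
        filter_upwards [hev] with k hk
        have h2 : ENNReal.ofReal M < ENNReal.ofReal (s k) := hk
        exact ((ENNReal.ofReal_lt_ofReal_iff_of_nonneg hM.le).mp h2).le
    rw [tendsto_order]
    constructor
    · intro a ha
      exact Eventually.of_forall (fun k => lt_of_lt_of_le ha (p_nonneg _ _))
    · intro ε hε
      obtain ⟨T, hTge⟩ := exists_nat_ge ((4:ℝ) + 8/ε)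
      have h8 : (0:ℝ) ≤ 8/ε := by positivity
      have hT4 : (4:ℝ) ≤ T := by linarith
      have hT1 : (1:ℝ) ≤ T := by linarith
      have hexpT : Real.exp (1 - (T:ℝ)^2/4) ≤ ε/2 := by
        have hsq : (T:ℝ) ≤ (T:ℝ)^2 := by nlinarith
        have h4 : 8/ε = 4*(2/ε) := by ring
        have h2 : 2/ε ≤ ((T:ℝ)^2/4 - 1) := by linarith
        have hy : (0:ℝ) < (T:ℝ)^2/4 - 1 := by
          have : (0:ℝ) < 2/ε := by positivity
          linarith
        have h1 : Real.exp (1 - (T:ℝ)^2/4) = Real.exp (-((T:ℝ)^2/4 - 1)) := by ring_nf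
        rw [h1]
        calc Real.exp (-((T:ℝ)^2/4 - 1)) ≤ 1/((T:ℝ)^2/4 - 1) := exp_neg_le_inv hy
        _ ≤ 1/(2/ε) := one_div_le_one_div_of_le (by positivity) h2
        _ = ε/2 := by field_simp
      set M : ℕ → ℕ := fun k => ⌈(T:ℝ) * Real.sqrt (n0 k)⌉₊ with hMdef
      filter_upwards [hev1, hsTop.eventually_ge_atTop ((T:ℝ)+1),
        hnn.eventually_ge_atTop (((T:ℝ)+1)^2),
        hR.eventually_ge_atTop (((T:ℝ)+1)/(2*ε) + 1)] with k hk1 hks hkn hkR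
      have hnn1 : (1:ℝ) ≤ (n0 k:ℝ) := by exact_mod_cast hk1
      have hRpos0 : 0 < Real.sqrt ((n0 k : ℕ):ℝ) := Real.sqrt_pos.mpr (by linarith)
      obtain ⟨R, hRdef⟩ : ∃ R : ℝ, Real.sqrt (((n0 k : ℕ)):ℝ) = R := ⟨_, rfl⟩
      rw [hRdef] at hRpos0
      have hnR : ((n0 k:ℕ):ℝ) = R*R := by rw [← hRdef]; exact hRR k
      have hR1 : ((T:ℝ)+1) ≤ R := by
        rw [← hRdef]
        calc ((T:ℝ)+1) = Real.sqrt (((T:ℝ)+1)^2) := (Real.sqrt_sq (by positivity)).symm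
        _ ≤ _ := Real.sqrt_le_sqrt hkn
      have hsk : s k = (f k:ℝ)/R := by rw [hsdef, ← hRdef]
      have hF : (f k:ℝ) = s k * R := by
        rw [hsk]; field_simp
      have hMceil : M k = ⌈(T:ℝ) * R⌉₊ := by simp only [hMdef]; rw [hRdef]
      have hMle : (M k:ℝ) < (T:ℝ)*R + 1 := by
        rw [hMceil]; exact Nat.ceil_lt_add_one (by positivity)
      have hMge : (T:ℝ)*R ≤ (M k:ℝ) := by rw [hMceil]; exact Nat.le_ceil _
      have hks' : (T:ℝ)+1 ≤ s k := hks
      have hMf : M k ≤ f k := by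
        have h : (M k:ℝ) ≤ (f k:ℝ) := by
          calc (M k:ℝ) ≤ (T:ℝ)*R + 1 := hMle.le
          _ ≤ (T:ℝ)*R + R := by linarith
          _ = ((T:ℝ)+1)*R := by ring
          _ ≤ s k * R := mul_le_mul_of_nonneg_right hks' hRpos0.le
          _ = (f k:ℝ) := hF.symm
        exact_mod_cast h
      have hM2n : M k ≤ 2 * n0 k := by
        have h : (M k:ℝ) ≤ 2*((n0 k:ℕ):ℝ) := by
          rw [hnR]
          exact arith_M2n (by linarith) hR1 hMle
        exact_mod_cast h
      have hb := (p_bound' (n := n0 k) (M k) hk1 hM2n).2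
      have hmono : p (n0 k) (f k) ≤ p (n0 k) (M k) := p_anti hk1 hMf
      have hexparg : (T:ℝ)^2/4 - 1 ≤ (M k:ℝ)*((M k:ℝ)-1)/(4*((n0 k:ℕ):ℝ)) := by
        rw [hnR]
        exact arith_exparg hT4 hR1 hMge
      have hexple : Real.exp (-((M k:ℝ)*((M k:ℝ)-1)/(4*((n0 k:ℕ):ℝ)))) ≤ Real.exp (1 - (T:ℝ)^2/4) :=
        Real.exp_le_exp.mpr (by linarith)
      have htail : (M k:ℝ)/(4*((n0 k:ℕ):ℝ)) < ε/2 := by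
        rw [hnR]
        exact arith_tail hε (by linarith) hR1 (by rw [← hRdef]; exact hkR) hMle
      calc p (n0 k) (f k) ≤ p (n0 k) (M k) := hmono
      _ ≤ Real.exp (-((M k:ℝ)*((M k:ℝ)-1)/(4*((n0 k:ℕ):ℝ)))) + (M k:ℝ)/(4*((n0 k:ℕ):ℝ)) := hb
      _ ≤ Real.exp (1 - (T:ℝ)^2/4) + (M k:ℝ)/(4*((n0 k:ℕ):ℝ)) := by linarith
      _ < ε/2 + ε/2 := by linarith
      _ = ε := by ring
  · -- finite case
    rw [if_neg hT]
    set b := β.toReal with hbdef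
    have hb0 : 0 ≤ b := ENNReal.toReal_nonneg
    have hs : Tendsto s atTop (𝓝 b) := by
      have h := (ENNReal.tendsto_toReal hT).comp hβ
      refine h.congr (fun k => ?_)
      simp only [Function.comp_apply]
      rw [ENNReal.toReal_ofReal (hs0 k)]
    have hs2 : ∀ k, s k ^ 2 = (f k:ℝ)^2 / (n0 k : ℝ) := by
      intro k
      rw [hsdef]
      rw [div_pow, Real.sq_sqrt (Nat.cast_nonneg _)]
    have hu : Tendsto (fun k => (f k:ℝ)*((f k:ℝ)-1)/(4*(n0 k:ℝ))) atTop (𝓝 (b^2/4)) := by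
      have base : Tendsto (fun k => ((s k)^2 - s k * (Real.sqrt (n0 k))⁻¹)/4) atTop
          (𝓝 ((b^2 - b*0)/4)) := (((hs.pow 2).sub (hs.mul ht)).div_const 4)
      have heq : ∀ k, ((s k)^2 - s k * (Real.sqrt (n0 k))⁻¹)/4
          = (f k:ℝ)*((f k:ℝ)-1)/(4*(n0 k:ℝ)) := by
        intro k
        conv_rhs => rw [hRR k]
        simp only [hsdef]
        ring
      rw [show (b^2 - b*0)/4 = b^2/4 by ring] at base
      exact base.congr heq
    have he1 : Tendsto (fun k => (f k:ℝ)^3/(4*(n0 k:ℝ)^2)) atTop (𝓝 0) := by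
      have base : Tendsto (fun k => ((s k)^3 * (Real.sqrt (n0 k))⁻¹)/4) atTop
          (𝓝 ((b^3 * 0)/4)) := (((hs.pow 3).mul ht).div_const 4)
      have heq : ∀ k, ((s k)^3 * (Real.sqrt (n0 k))⁻¹)/4 = (f k:ℝ)^3/(4*(n0 k:ℝ)^2) := by
        intro k
        conv_rhs => rw [hRR k]
        simp only [hsdef]
        ring
      rw [show (b^3*0)/4 = 0 by ring] at base
      exact base.congr heq
    have he2 : Tendsto (fun k => (f k:ℝ)/(4*(n0 k:ℝ))) atTop (𝓝 0) := by
      have base : Tendsto (fun k => (s k * (Real.sqrt (n0 k))⁻¹)/4) atTop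
          (𝓝 ((b * 0)/4)) := ((hs.mul ht).div_const 4)
      have heq : ∀ k, (s k * (Real.sqrt (n0 k))⁻¹)/4 = (f k:ℝ)/(4*(n0 k:ℝ)) := by
        intro k
        conv_rhs => rw [hRR k]
        simp only [hsdef]
        ring
      rw [show (b*0)/4 = 0 by ring] at base
      exact base.congr heq
    have hfev : ∀ᶠ k in atTop, f k ≤ 2 * n0 k := by
      filter_upwards [hs.eventually_le_const (lt_add_one b),
        hnn.eventually_ge_atTop ((b+1)^2), hev1] with k hk1 hk2 hk3
      have hRpos : 0 < Real.sqrt (n0 k) := Real.sqrt_pos.mpr (by exact_mod_cast hk3)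
      have hR1 : (b+1) ≤ Real.sqrt (n0 k) := by
        calc (b+1) = Real.sqrt ((b+1)^2) := (Real.sqrt_sq (by positivity)).symm
        _ ≤ _ := Real.sqrt_le_sqrt hk2
      have hF : (f k : ℝ) = s k * Real.sqrt (n0 k) := by
        rw [hsdef]; field_simp
      have : (f k:ℝ) ≤ 2*(n0 k:ℝ) := by
        calc (f k:ℝ) = s k * Real.sqrt (n0 k) := hF
        _ ≤ (b+1) * Real.sqrt (n0 k) := mul_le_mul_of_nonneg_right hk1 hRpos.le
        _ ≤ Real.sqrt (n0 k) * Real.sqrt (n0 k) := mul_le_mul_of_nonneg_right hR1 hRpos.le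
        _ = (n0 k:ℝ) := (hRR k).symm
        _ ≤ 2*(n0 k:ℝ) := by linarith [Nat.cast_nonneg (n0 k) (α := ℝ)]
      exact_mod_cast this
    have hlo : Tendsto (fun k => Real.exp (-((f k:ℝ)*((f k:ℝ)-1)/(4*(n0 k:ℝ))))
        - (f k:ℝ)^3/(4*(n0 k:ℝ)^2)) atTop (𝓝 (Real.exp (-(b^2/4)) - 0)) :=
      ((Real.continuous_exp.tendsto _).comp hu.neg).sub he1
    have hhi : Tendsto (fun k => Real.exp (-((f k:ℝ)*((f k:ℝ)-1)/(4*(n0 k:ℝ))))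
        + (f k:ℝ)/(4*(n0 k:ℝ))) atTop (𝓝 (Real.exp (-(b^2/4)) + 0)) :=
      ((Real.continuous_exp.tendsto _).comp hu.neg).add he2
    rw [sub_zero] at hlo
    rw [add_zero] at hhi
    have hfin : Tendsto (fun k => p (n0 k) (f k)) atTop (𝓝 (Real.exp (-(b^2/4)))) := by
      apply tendsto_of_tendsto_of_tendsto_of_le_of_le' hlo hhi
      · filter_upwards [hev1, hfev] with k h1 h2
        exact (p_bound' (f k) h1 h2).1
      · filter_upwards [hev1, hfev] with k h1 h2
        exact (p_bound' (f k) h1 h2).2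
    have : Real.exp (-(b/2)^2) = Real.exp (-(b^2/4)) := by ring_nf
    rw [this]
    exact hfin

end RandomSAT
end

section
/- Let n, m ∈ ℕ and k₁,…,k_m ∈ ℕ with 1 ≤ k_j ≤ n for each j, and let φ be a random mixed CNF formula with clause lengths (k₁,…,k_m) on n variables. If L, L′ ⊆ ±[n] are consistent sets of literals with |L| ≥ |L′|, then P(φ_L ∈ SAT) ≤ P(φ_{L′} ∈ SAT). -/
open Filter Topology
open scoped ENNReal

namespace RandomSAT

/-- `φ(x) = 1` for a mixed CNF formula with clause lengths `k j`. -/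
def MixedSat {n m : ℕ} {k : Fin m → ℕ} (φ : (j : Fin m) → ClauseData n (k j))
    (x : ℤ → Bool) : Prop :=
  ∀ j, ClauseSat (φ j) x

/-- Action of a signed permutation of variables on a clause. -/
def actC {n k : ℕ} (E : Equiv.Perm (Fin n)) (s : Fin n → Bool) (c : ClauseData n k) :
    ClauseData n k :=
  ⟨(fun i => E (c.1.1 i), fun i => xor (s (c.1.1 i)) (c.1.2 i)),
    fun i j h => c.2 (E.injective h)⟩

lemma actC_injective {n k : ℕ} (E : Equiv.Perm (Fin n)) (s : Fin n → Bool) :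
    Function.Injective (actC (n := n) (k := k) E s) := by
  rintro ⟨⟨v, σ⟩, hv⟩ ⟨⟨v', σ'⟩, hv'⟩ h
  have h1 : (fun i => E (v i)) = (fun i => E (v' i)) := congrArg (fun c => c.1.1) h
  have hvv : v = v' := by
    funext i
    exact E.injective (congrFun h1 i)
  subst hvv
  have h2 : (fun i => xor (s (v i)) (σ i)) = (fun i => xor (s (v i)) (σ' i)) :=
    congrArg (fun c => c.1.2) h
  have hσσ : σ = σ' := by
    funext i
    have := congrFun h2 i
    revert this
    cases s (v i) <;> cases σ i <;> cases σ' i <;> simp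
  subst hσσ
  rfl

/-- Action of a signed permutation of variables on an assignment. -/
def actX {n : ℕ} (E : Equiv.Perm (Fin n)) (s : Fin n → Bool) (x : ℤ → Bool) : ℤ → Bool :=
  fun w =>
    if hw : 0 < w ∧ w ≤ (n : ℤ) then
      xor (s (E.symm ⟨(w - 1).toNat, by omega⟩))
        (x (((E.symm ⟨(w - 1).toNat, by omega⟩ : Fin n) : ℤ) + 1))
    else x w

lemma actX_apply {n : ℕ} (E : Equiv.Perm (Fin n)) (s : Fin n → Bool) (x : ℤ → Bool)
    (a : Fin n) :
    actX E s x (((E a : Fin n) : ℤ) + 1) = xor (s a) (x ((a : ℤ) + 1)) := by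
  have hlt : ((E a : Fin n) : ℕ) < n := (E a).isLt
  have h : (0 : ℤ) < ((E a : Fin n) : ℤ) + 1 ∧ ((E a : Fin n) : ℤ) + 1 ≤ (n : ℤ) := by
    constructor <;> omega
  rw [actX, dif_pos h]
  have hval : ((((E a : Fin n) : ℤ) + 1 - 1)).toNat = ((E a : Fin n) : ℕ) := by omega
  simp only [hval, Fin.eta, Equiv.symm_apply_apply]

lemma mem_pm_abs {n : ℕ} {l : ℤ} (h : l ∈ pm n) : 1 ≤ |l| ∧ |l| ≤ (n : ℤ) := by
  simp only [pm, Finset.mem_erase, Finset.mem_Icc] at h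
  rcases abs_cases l with ⟨h1, h2⟩ | ⟨h1, h2⟩ <;> omega

lemma card_subtype_varset {n : ℕ} (L : Finset ℤ) (hL : L ⊆ pm n) (hc : Consistent L) :
    Fintype.card {a : Fin n // ((a : ℤ) + 1) ∈ L ∨ (-((a : ℤ) + 1)) ∈ L} = L.card := by
  classical
  rw [Fintype.card_subtype]
  refine Finset.card_bij' (fun a _ => if ((a : ℤ) + 1) ∈ L then (a : ℤ) + 1 else -((a : ℤ) + 1))
    (fun l hl => (⟨(|l| - 1).toNat, by have := mem_pm_abs (hL hl); omega⟩ : Fin n))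
    ?_ ?_ ?_ ?_
  · intro a ha
    simp only [Finset.mem_filter, Finset.mem_univ, true_and] at ha
    show (if ((a : ℤ) + 1) ∈ L then ((a : ℤ) + 1) else -((a : ℤ) + 1)) ∈ L
    split_ifs with h
    · exact h
    · exact ha.resolve_left h
  · intro l hl
    have habs := mem_pm_abs (hL hl)
    simp only [Finset.mem_filter, Finset.mem_univ, true_and]
    have gen : ∀ b : Fin n, ((b : ℤ) + 1 = |l|) →
        ((((b : ℤ) + 1) ∈ L) ∨ (-((b : ℤ) + 1)) ∈ L) := by
      intro b hb
      rw [hb]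
      rcases abs_cases l with ⟨he, h0⟩ | ⟨he, h0⟩
      · left; rw [he]; exact hl
      · right; rw [he, neg_neg]; exact hl
    exact gen ⟨(|l| - 1).toNat, by omega⟩
      (by show (((|l| - 1).toNat : ℕ) : ℤ) + 1 = |l|; omega)
  · intro a ha
    apply Fin.ext
    show ((|if ((a : ℤ) + 1) ∈ L then (a : ℤ) + 1 else -((a : ℤ) + 1)| - 1).toNat) = (a : ℕ)
    split_ifs with h
    · rw [abs_of_pos (show (0:ℤ) < (a : ℤ) + 1 by omega)]
      omega
    · rw [abs_neg, abs_of_pos (show (0:ℤ) < (a : ℤ) + 1 by omega)]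
      omega
  · intro l hl
    have habs := mem_pm_abs (hL hl)
    have gen : ∀ b : Fin n, ((b : ℤ) + 1 = |l|) →
        (if ((b : ℤ) + 1) ∈ L then (b : ℤ) + 1 else -((b : ℤ) + 1)) = l := by
      intro b hb
      rw [hb]
      rcases abs_cases l with ⟨he, h0⟩ | ⟨he, h0⟩
      · rw [he, if_pos hl]
      · rw [he, if_neg (hc l hl), neg_neg]
    apply gen
    show (((|l| - 1).toNat : ℕ) : ℤ) + 1 = |l|
    omega

lemma fixes_transfer {n : ℕ} (L1 L2 : Finset ℤ) (h1 : L1 ⊆ pm n) (h2 : L2 ⊆ pm n)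
    (hc1 : Consistent L1) (hc2 : Consistent L2)
    (E : Equiv.Perm (Fin n)) (s : Fin n → Bool)
    (hE : ∀ b : Fin n, (((b : ℤ) + 1) ∈ L2 ∨ (-((b : ℤ) + 1)) ∈ L2) →
      ∃ a : Fin n, ((((a : ℤ) + 1) ∈ L1 ∨ (-((a : ℤ) + 1)) ∈ L1) ∧ E a = b))
    (hs : ∀ a : Fin n, s a = xor (decide ((-((a : ℤ) + 1)) ∈ L1))
      (decide ((-(((E a : Fin n) : ℤ) + 1)) ∈ L2)))
    (x : ℤ → Bool) (hfix : Fixes L1 x) : Fixes L2 (actX E s x) := by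
  intro l' hl'
  have habs := mem_pm_abs (h2 hl')
  set b : Fin n := ⟨(|l'| - 1).toNat, by omega⟩ with hbdef
  have hbl : (b : ℤ) + 1 = |l'| := by
    rw [hbdef]
    show (((|l'| - 1).toNat : ℕ) : ℤ) + 1 = |l'|
    omega
  have hl0 : l' ≠ 0 := by
    intro h
    rw [h] at habs
    simp at habs
  have hp2 : ((b : ℤ) + 1) ∈ L2 ∨ (-((b : ℤ) + 1)) ∈ L2 := by
    rcases abs_cases l' with ⟨he, h0⟩ | ⟨he, h0⟩
    · left
      rw [show (b : ℤ) + 1 = l' by omega]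
      exact hl'
    · right
      rw [show -((b : ℤ) + 1) = l' by omega]
      exact hl'
  obtain ⟨a, hpa, hEa⟩ := hE b hp2
  have hx' : actX E s x ((b : ℤ) + 1) = xor (s a) (x ((a : ℤ) + 1)) := by
    rw [← hEa]
    exact actX_apply E s x a
  have hapos : (0:ℤ) < (a : ℤ) + 1 := by omega
  have hxa : x ((a : ℤ) + 1) = ! (decide ((-((a : ℤ) + 1)) ∈ L1)) := by
    rcases hpa with hpos | hneg
    · have h0 := hfix _ hpos
      rw [abs_of_pos hapos] at h0
      rw [h0]
      have hne : (-((a : ℤ) + 1)) ∉ L1 := hc1 _ hpos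
      rw [decide_eq_true hapos, decide_eq_false hne]
      rfl
    · have h0 := hfix _ hneg
      rw [abs_neg, abs_of_pos hapos] at h0
      rw [h0]
      have hlt : ¬ ((0:ℤ) < -((a : ℤ) + 1)) := by omega
      rw [decide_eq_false hlt, decide_eq_true hneg]
      rfl
  show actX E s x |l'| = decide (0 < l')
  rw [← hbl, hx', hs a, hEa, hxa]
  have hbx : ∀ p q : Bool, xor (xor p q) (!p) = !q := by decide
  rw [hbx]
  rcases abs_cases l' with ⟨he, h0⟩ | ⟨he, h0⟩
  · rw [show -((b : ℤ) + 1) = -l' by omega]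
    rw [decide_eq_false (hc2 l' hl'), decide_eq_true (show (0:ℤ) < l' by omega)]
    rfl
  · rw [show -((b : ℤ) + 1) = l' by omega]
    rw [decide_eq_true hl', decide_eq_false (show ¬ ((0:ℤ) < l') by omega)]
    rfl

lemma clauseSat_actC {n k : ℕ} (E : Equiv.Perm (Fin n)) (s : Fin n → Bool)
    (c : ClauseData n k) (x : ℤ → Bool) (h : ClauseSat c x) :
    ClauseSat (actC E s c) (actX E s x) := by
  obtain ⟨i, hi⟩ := h
  refine ⟨i, ?_⟩
  show actX E s x (((E (c.1.1 i) : Fin n) : ℤ) + 1) = xor (s (c.1.1 i)) (c.1.2 i)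
  rw [actX_apply, hi]

lemma card_event_le {n m : ℕ} (k : Fin m → ℕ)
    (L1 L2 : Finset ℤ) (h1 : L1 ⊆ pm n) (h2 : L2 ⊆ pm n)
    (hc1 : Consistent L1) (hc2 : Consistent L2) (hcard : L1.card = L2.card) :
    Nat.card {φ : (j : Fin m) → ClauseData n (k j) | ∃ x, Fixes L1 x ∧ MixedSat φ x}
      ≤ Nat.card {φ : (j : Fin m) → ClauseData n (k j) | ∃ x, Fixes L2 x ∧ MixedSat φ x} := by
  classical
  have hcards : Fintype.card {a : Fin n // ((a : ℤ) + 1) ∈ L1 ∨ (-((a : ℤ) + 1)) ∈ L1}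
      = Fintype.card {a : Fin n // ((a : ℤ) + 1) ∈ L2 ∨ (-((a : ℤ) + 1)) ∈ L2} := by
    rw [card_subtype_varset L1 h1 hc1, card_subtype_varset L2 h2 hc2, hcard]
  set g := Fintype.equivOfCardEq hcards with hg
  set E := g.extendSubtype with hEdef
  set s : Fin n → Bool := fun a => xor (decide ((-((a : ℤ) + 1)) ∈ L1))
    (decide ((-(((E a : Fin n) : ℤ) + 1)) ∈ L2)) with hsdef
  have hE : ∀ b : Fin n, (((b : ℤ) + 1) ∈ L2 ∨ (-((b : ℤ) + 1)) ∈ L2) →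
      ∃ a : Fin n, ((((a : ℤ) + 1) ∈ L1 ∨ (-((a : ℤ) + 1)) ∈ L1) ∧ E a = b) := by
    intro b hb
    refine ⟨(g.symm ⟨b, hb⟩).1, (g.symm ⟨b, hb⟩).2, ?_⟩
    rw [hEdef, Equiv.extendSubtype_apply_of_mem g _ (g.symm ⟨b, hb⟩).2]
    simp
  have key : ∀ φ : (j : Fin m) → ClauseData n (k j), (∃ x, Fixes L1 x ∧ MixedSat φ x) →
      (∃ x, Fixes L2 x ∧ MixedSat (fun j => actC E s (φ j)) x) := by
    rintro φ ⟨x, hfix, hsat⟩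
    exact ⟨actX E s x,
      fixes_transfer L1 L2 h1 h2 hc1 hc2 E s hE (fun a => congrFun hsdef a) x hfix,
      fun j => clauseSat_actC E s (φ j) x (hsat j)⟩
  exact Nat.card_le_card_of_injective
    (fun φ => ⟨fun j => actC E s (φ.1 j), key φ.1 φ.2⟩)
    (fun φ ψ h => Subtype.ext (funext fun j =>
      actC_injective E s (congrFun (congrArg Subtype.val h) j)))

/-- For a random mixed CNF formula, fixing more variables can only decrease
the probability of satisfiability. -/
theorem prob_SATFixed_antitone_in_card
    (n m : ℕ) (k : Fin m → ℕ) (hk : ∀ j, 1 ≤ k j ∧ k j ≤ n)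
    (L L' : Finset ℤ) (hLsub : L ⊆ pm n) (hL'sub : L' ⊆ pm n)
    (hLcons : Consistent L) (hL'cons : Consistent L')
    (hcard : L'.card ≤ L.card) :
    prob {φ : (j : Fin m) → ClauseData n (k j) | ∃ x, Fixes L x ∧ MixedSat φ x}
      ≤ prob {φ : (j : Fin m) → ClauseData n (k j) | ∃ x, Fixes L' x ∧ MixedSat φ x} := by
  classical
  obtain ⟨L'', hsub, hcardeq⟩ := Finset.exists_subset_card_eq hcard
  have hL''sub : L'' ⊆ pm n := hsub.trans hLsub
  have hL''cons : Consistent L'' := fun l hl h2 => hLcons l (hsub hl) (hsub h2)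
  have hmono : Nat.card {φ : (j : Fin m) → ClauseData n (k j) | ∃ x, Fixes L x ∧ MixedSat φ x}
      ≤ Nat.card {φ : (j : Fin m) → ClauseData n (k j) | ∃ x, Fixes L'' x ∧ MixedSat φ x} := by
    rw [Nat.card_coe_set_eq, Nat.card_coe_set_eq]
    refine Set.ncard_le_ncard ?_ (Set.toFinite _)
    rintro φ ⟨x, hfix, hsat⟩
    exact ⟨x, fun l hl => hfix l (hsub hl), hsat⟩
  have hle := hmono.trans (card_event_le k L'' L' hL''sub hL'sub hL''cons hL'cons hcardeq)
  have hΩ : (0:ℝ) < (Fintype.card ((j : Fin m) → ClauseData n (k j)) : ℝ) := by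
    have hne : Nonempty ((j : Fin m) → ClauseData n (k j)) :=
      ⟨fun j => ⟨(Fin.castLE (hk j).2, fun _ => true), Fin.castLE_injective (hk j).2⟩⟩
    exact_mod_cast Fintype.card_pos
  unfold prob
  gcongr


end RandomSAT
end

section
/- Let 0 ≤ α < ∞ and 0 ≤ γ < ∞. Let n₀, m, f : ℕ → ℕ satisfy n₀(n) → ∞, m(n) → ∞, m(n)/n₀(n) → α, f(n) ≤ n₀(n), and f(n)·m(n)^{1/3}/n₀(n) → γ as n → ∞. For each n let L_n ⊆ ±[n₀(n)] be a consistent set of literals with |L_n| = f(n), and let φ_n be a random 3-CNF formula with m(n) clauses and n₀(n) variables, with literals L_{j,1}, L_{j,2}, L_{j,3} in clause j. Then P(for every j ∈ [m(n)], not all three of L_{j,1}, L_{j,2}, L_{j,3} lie in −L_n) → exp(−(γ/2)³) as n → ∞. -/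
open Filter Topology
open scoped ENNReal

namespace RandomSAT

/-! ### Auxiliary lemmas -/


lemma card_clauseData (n k : ℕ) :
    Fintype.card (ClauseData n k) = 2 ^ k * n.descFactorial k := by
  have e : ClauseData n k ≃ (Fin k ↪ Fin n) × (Fin k → Bool) :=
    { toFun := fun c => (⟨c.1.1, c.2⟩, c.1.2)
      invFun := fun p => ⟨(p.1.1, p.2), p.1.2⟩
      left_inv := fun c => rfl
      right_inv := fun p => rfl }
  rw [Fintype.card_congr e, Fintype.card_prod, Fintype.card_embedding_eq]
  simp [Fintype.card_fun]
  ring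

def vars (n : ℕ) (L : Finset ℤ) : Finset (Fin n) :=
  Finset.univ.filter fun v => (((v : ℕ) : ℤ) + 1) ∈ L ∨ (-(((v : ℕ) : ℤ) + 1)) ∈ L

lemma card_vars (n : ℕ) (L : Finset ℤ) (hsub : L ⊆ pm n) (hcons : Consistent L) :
    (vars n L).card = L.card := by
  classical
  have hmem : ∀ l ∈ L, l ≠ 0 ∧ l.natAbs ≤ n := by
    intro l hl
    have := hsub hl
    simp only [pm, Finset.mem_erase, Finset.mem_Icc] at this
    exact ⟨this.1, by omega⟩
  symm
  refine Finset.card_bij' (fun l hl => (⟨l.natAbs - 1, by have := hmem l hl; omega⟩ : Fin n))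
    (fun v hv => if (((v : ℕ) : ℤ) + 1) ∈ L then ((v : ℕ) : ℤ) + 1 else -(((v : ℕ) : ℤ) + 1))
    ?_ ?_ ?_ ?_
  · intro l hl
    have h := hmem l hl
    simp only [vars, Finset.mem_filter, Finset.mem_univ, true_and]
    have hval : ((((⟨l.natAbs - 1, by have := hmem l hl; omega⟩ : Fin n) : ℕ) : ℤ) + 1) = (l.natAbs : ℤ) := by
      have : ((⟨l.natAbs - 1, by have := hmem l hl; omega⟩ : Fin n) : ℕ) = l.natAbs - 1 := rfl
      rw [this]; omega
    rw [hval]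
    rcases Int.natAbs_eq l with h1 | h1
    · left; rw [← h1]; exact hl
    · right
      have : -(l.natAbs : ℤ) = l := by omega
      rw [this]; exact hl
  · intro v hv
    simp only [vars, Finset.mem_filter, Finset.mem_univ, true_and] at hv
    by_cases h : (((v : ℕ) : ℤ) + 1) ∈ L
    · simpa [h] using h
    · have h2 : (-(((v : ℕ) : ℤ) + 1)) ∈ L := hv.resolve_left h
      simpa [h] using h2
  · intro l hl
    have h := hmem l hl
    have hval : ((((⟨l.natAbs - 1, by have := hmem l hl; omega⟩ : Fin n) : ℕ) : ℤ) + 1) = (l.natAbs : ℤ) := by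
      have : ((⟨l.natAbs - 1, by have := hmem l hl; omega⟩ : Fin n) : ℕ) = l.natAbs - 1 := rfl
      rw [this]; omega
    simp only [hval]
    rcases lt_or_gt_of_ne h.1 with hneg | hpos
    · have habs : (l.natAbs : ℤ) = -l := by omega
      rw [habs]
      have hnl : (-l) ∉ L := hcons l hl
      simp [hnl]
    · have habs : (l.natAbs : ℤ) = l := by omega
      rw [habs]
      simp [hl]
  · intro v hv
    by_cases h : (((v : ℕ) : ℤ) + 1) ∈ L
    · simp only [h, if_true]
      apply Fin.ext
      have : ((((v : ℕ) : ℤ) + 1)).natAbs = (v : ℕ) + 1 := by omega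
      simp [this]
    · simp only [h, if_false]
      apply Fin.ext
      have h2 : ((-1 + -((v:ℕ):ℤ))).natAbs - 1 = (v : ℕ) := by omega
      simp [h2]

lemma mem_vars_of_bad {n k : ℕ} (L : Finset ℤ) (c : ClauseData n k) (i : Fin k)
    (h : -(lit c i) ∈ L) : c.1.1 i ∈ vars n L := by
  simp only [vars, Finset.mem_filter, Finset.mem_univ, true_and]
  unfold lit at h
  by_cases hb : c.1.2 i
  · right; rw [hb, if_pos rfl] at h; simpa using h
  · left; rw [if_neg hb] at h; simpa using h

lemma card_bad (n k : ℕ) (L : Finset ℤ) (hcons : Consistent L) :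
    Nat.card {c : ClauseData n k // ∀ i, -(lit c i) ∈ L} = (vars n L).card.descFactorial k := by
  classical
  have e : {c : ClauseData n k // ∀ i, -(lit c i) ∈ L} ≃
      {g : Fin k → {v // v ∈ vars n L} // Function.Injective g} := by
    refine
    { toFun := fun c => ⟨fun i => ⟨c.1.1.1 i, mem_vars_of_bad L c.1 i (c.2 i)⟩,
        fun i j h => c.1.2 (congrArg Subtype.val h)⟩
      invFun := fun g => ⟨⟨(fun i => (g.1 i : Fin n),
          fun i => decide ((-((((g.1 i : Fin n) : ℕ) : ℤ) + 1)) ∈ L)),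
          fun i j h => g.2 (Subtype.ext h)⟩, ?_⟩
      left_inv := ?_
      right_inv := ?_ }
    · intro i
      have hv := (g.1 i).2
      simp only [vars, Finset.mem_filter, Finset.mem_univ, true_and] at hv
      unfold lit
      set X : ℤ := (((g.1 i : Fin n) : ℕ) : ℤ) with hX
      by_cases h : (-(X + 1)) ∈ L
      · rw [if_pos (decide_eq_true h), one_mul]
        exact h
      · have h2 := hv.resolve_right h
        rw [if_neg (by simpa using h), show -(-1 * (X + 1)) = X + 1 from by ring]
        exact h2
    · intro c
      apply Subtype.ext
      apply Subtype.ext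
      apply Prod.ext
      · rfl
      · funext i
        simp only
        have hbad := c.2 i
        unfold lit at hbad
        by_cases hb : c.1.1.2 i
        · rw [hb, if_pos rfl] at hbad
          rw [hb]
          have h4 : (-(((c.1.1.1 i : ℕ) : ℤ) + 1)) ∈ L := by simpa using hbad
          exact decide_eq_true h4
        · rw [Bool.not_eq_true] at hb
          rw [hb, if_neg Bool.false_ne_true] at hbad
          have hIn : ((((c.1.1.1 i : ℕ) : ℤ)) + 1) ∈ L := by
            have : -(-1 * (((c.1.1.1 i : ℕ) : ℤ) + 1)) = ((c.1.1.1 i : ℕ) : ℤ) + 1 := by ring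
            rwa [this] at hbad
          have hnot : (-((((c.1.1.1 i : ℕ) : ℤ)) + 1)) ∉ L := hcons _ hIn
          rw [hb]
          exact decide_eq_false hnot
    · intro g
      apply Subtype.ext
      funext i
      apply Subtype.ext
      rfl
  rw [Nat.card_congr e, Nat.card_eq_fintype_card,
    Fintype.card_congr (Equiv.subtypeInjectiveEquivEmbedding _ _),
    Fintype.card_embedding_eq]
  simp

lemma card_good (n m k : ℕ) (L : Finset ℤ) (hsub : L ⊆ pm n) (hcons : Consistent L) :
    Nat.card {φ : (Fin m → ClauseData n k) | ∀ j, ¬ (∀ i : Fin k, -(lit (φ j) i) ∈ L)}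
      = (2 ^ k * n.descFactorial k - L.card.descFactorial k) ^ m := by
  classical
  have e : {φ : (Fin m → ClauseData n k) | ∀ j, ¬ (∀ i : Fin k, -(lit (φ j) i) ∈ L)} ≃
      (Fin m → {c : ClauseData n k // ¬ (∀ i : Fin k, -(lit c i) ∈ L)}) :=
    Equiv.subtypePiEquivPi (p := fun _ c => ¬ (∀ i : Fin k, -(lit c i) ∈ L))
  rw [Nat.card_congr e, Nat.card_eq_fintype_card, Fintype.card_fun, Fintype.card_fin]
  congr 1
  rw [Fintype.card_subtype_compl, card_clauseData, ← card_vars n L hsub hcons,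
    ← Nat.card_eq_fintype_card, card_bad n k L hcons]

/-! ### Auxiliary analytic lemmas -/

lemma cast_sub_ge (a b : ℕ) : (a : ℝ) - (b : ℝ) ≤ ((a - b : ℕ) : ℝ) := by
  rcases le_or_gt b a with h | h
  · rw [Nat.cast_sub h]
  · have h1 : a - b = 0 := by omega
    rw [h1]
    push_cast
    have : (a : ℝ) ≤ (b : ℝ) := by exact_mod_cast h.le
    linarith

lemma tendsto_one_sub_pow (b : ℕ → ℝ) (m : ℕ → ℕ) (c : ℝ)
    (hb : Tendsto b atTop (𝓝 0))
    (hmb : Tendsto (fun n => (m n : ℝ) * b n) atTop (𝓝 c)) :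
    Tendsto (fun n => (1 - b n) ^ (m n)) atTop (𝓝 (Real.exp (-c))) := by
  have hb1 : ∀ᶠ n in atTop, b n < 1 := hb.eventually_lt_const one_pos
  have hupper : ∀ᶠ n in atTop,
      (1 - b n) ^ (m n) ≤ Real.exp (-((m n : ℝ) * b n)) := by
    filter_upwards [hb1] with n h1
    have h : 1 - b n ≤ Real.exp (-(b n)) := by
      have := Real.add_one_le_exp (-(b n))
      linarith
    calc (1 - b n) ^ (m n) ≤ (Real.exp (-(b n))) ^ (m n) :=
          pow_le_pow_left₀ (by linarith) h _
      _ = Real.exp (-((m n : ℝ) * b n)) := by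
          rw [← Real.exp_nat_mul]; ring_nf
  have hlower : ∀ᶠ n in atTop,
      Real.exp (-((m n : ℝ) * b n * (1 - b n)⁻¹)) ≤ (1 - b n) ^ (m n) := by
    filter_upwards [hb1] with n h1
    have h1b : 0 < 1 - b n := by linarith
    have key : Real.exp (-(b n / (1 - b n))) ≤ 1 - b n := by
      rw [Real.exp_neg, inv_le_comm₀ (Real.exp_pos _) h1b]
      have : (1 - b n)⁻¹ = 1 + b n / (1 - b n) := by field_simp; ring
      rw [this]
      have := Real.add_one_le_exp (b n / (1 - b n))
      linarith
    calc Real.exp (-((m n : ℝ) * b n * (1 - b n)⁻¹))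
        = (Real.exp (-(b n / (1 - b n)))) ^ (m n) := by
          rw [← Real.exp_nat_mul]; ring_nf
      _ ≤ (1 - b n) ^ (m n) := pow_le_pow_left₀ (Real.exp_nonneg _) key _
  have hL : Tendsto (fun n => Real.exp (-((m n : ℝ) * b n * (1 - b n)⁻¹))) atTop
      (𝓝 (Real.exp (-c))) := by
    have h3 : Tendsto (fun n => -((m n : ℝ) * b n * (1 - b n)⁻¹)) atTop (𝓝 (-c)) := by
      have h2 : Tendsto (fun n => (1 - b n)⁻¹) atTop (𝓝 1) := by
        have := ((tendsto_const_nhds (x := (1:ℝ))).sub hb).inv₀ (by norm_num)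
        simpa using this
      have := (hmb.mul h2).neg
      simpa using this
    exact (Real.continuous_exp.tendsto _).comp h3
  have hU : Tendsto (fun n => Real.exp (-((m n : ℝ) * b n))) atTop
      (𝓝 (Real.exp (-c))) :=
    (Real.continuous_exp.tendsto _).comp hmb.neg
  exact tendsto_of_tendsto_of_tendsto_of_le_of_le' hL hU hlower hupper


/-- The probability that no clause of a random 3-CNF formula becomes a 0-clause
when fixing the variables dictated by `L n` tends to `exp(−(γ/2)³)`, where
`f(n)·m(n)^{1/3}/n₀(n) → γ`. -/
theorem prob_no_zero_clause_3CNF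
    (α γ : ℝ) (hα0 : 0 ≤ α) (hγ0 : 0 ≤ γ)
    (n0 m f : ℕ → ℕ) (L : (n : ℕ) → Finset ℤ)
    (hn0 : Tendsto n0 atTop atTop)
    (hm : Tendsto m atTop atTop)
    (hmα : Tendsto (fun n => (m n : ℝ) / (n0 n : ℝ)) atTop (𝓝 α))
    (hfle : ∀ n, f n ≤ n0 n)
    (hγ : Tendsto (fun n => (f n : ℝ) * (m n : ℝ) ^ ((1 : ℝ) / 3) / (n0 n : ℝ))
      atTop (𝓝 γ))
    (hLsub : ∀ n, L n ⊆ pm (n0 n))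
    (hLcons : ∀ n, Consistent (L n))
    (hLcard : ∀ n, (L n).card = f n) :
    Tendsto (fun n => prob {φ : CNF (n0 n) (m n) 3 |
        ∀ j, ¬ (∀ i : Fin 3, -(lit (φ j) i) ∈ L n)}) atTop
      (𝓝 (Real.exp (-(γ / 2) ^ 3))) := by
  classical
  set B : ℕ → ℕ := fun n => (f n).descFactorial 3 with hB
  set N : ℕ → ℕ := fun n => 8 * (n0 n).descFactorial 3 with hN
  set b : ℕ → ℝ := fun n => (B n : ℝ) / (N n : ℝ) with hbdef
  -- m^(1/3)/n0 → 0
  have hmr : Tendsto (fun n => (m n : ℝ)) atTop atTop := tendsto_natCast_atTop_atTop.comp hm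
  have hnr : Tendsto (fun n => (n0 n : ℝ)) atTop atTop := tendsto_natCast_atTop_atTop.comp hn0
  have h13 : Tendsto (fun n => (m n : ℝ) ^ ((1:ℝ)/3) / (n0 n : ℝ)) atTop (𝓝 0) := by
    have heq : ∀ᶠ n in atTop,
        ((m n : ℝ) / (n0 n : ℝ)) / (m n : ℝ) ^ ((2:ℝ)/3)
          = (m n : ℝ) ^ ((1:ℝ)/3) / (n0 n : ℝ) := by
      filter_upwards [hm.eventually_ge_atTop 1, hn0.eventually_ge_atTop 1] with n hm1 hn1
      have hmpos : (0:ℝ) < (m n : ℝ) := by exact_mod_cast hm1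
      have hnpos : (0:ℝ) < (n0 n : ℝ) := by exact_mod_cast hn1
      have hsplit : (m n : ℝ) ^ ((1:ℝ)/3) * (m n : ℝ) ^ ((2:ℝ)/3) = (m n : ℝ) := by
        rw [← Real.rpow_add hmpos]
        norm_num
      rw [div_div, div_eq_div_iff (by positivity) (by positivity)]
      linear_combination (-(n0 n : ℝ)) * hsplit
    have h2 : Tendsto (fun n => ((m n : ℝ) / (n0 n : ℝ)) / (m n : ℝ) ^ ((2:ℝ)/3)) atTop (𝓝 0) :=
      hmα.div_atTop ((tendsto_rpow_atTop (by norm_num)).comp hmr)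
    exact Tendsto.congr' heq h2
  -- lower inner limit
  have ha : Tendsto (fun n => (((f n - 2 : ℕ)) : ℝ) * (m n : ℝ) ^ ((1:ℝ)/3) / (n0 n : ℝ))
      atTop (𝓝 γ) := by
    have hlow : ∀ᶠ n in atTop,
        (f n : ℝ) * (m n : ℝ) ^ ((1:ℝ)/3) / (n0 n : ℝ) - 2 * ((m n : ℝ) ^ ((1:ℝ)/3) / (n0 n : ℝ))
          ≤ (((f n - 2 : ℕ)) : ℝ) * (m n : ℝ) ^ ((1:ℝ)/3) / (n0 n : ℝ) := by
      filter_upwards [hn0.eventually_ge_atTop 1] with n hn1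
      have hnpos : (0:ℝ) < (n0 n : ℝ) := by exact_mod_cast hn1
      have h1 : (f n : ℝ) - 2 ≤ (((f n - 2 : ℕ)) : ℝ) := cast_sub_ge _ _
      have hx : (0:ℝ) ≤ (m n : ℝ) ^ ((1:ℝ)/3) := Real.rpow_nonneg (Nat.cast_nonneg _) _
      have : ((f n : ℝ) - 2) * (m n : ℝ) ^ ((1:ℝ)/3) / (n0 n : ℝ)
          ≤ (((f n - 2 : ℕ)) : ℝ) * (m n : ℝ) ^ ((1:ℝ)/3) / (n0 n : ℝ) := by gcongr
      calc (f n : ℝ) * (m n : ℝ) ^ ((1:ℝ)/3) / (n0 n : ℝ)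
            - 2 * ((m n : ℝ) ^ ((1:ℝ)/3) / (n0 n : ℝ))
          = ((f n : ℝ) - 2) * (m n : ℝ) ^ ((1:ℝ)/3) / (n0 n : ℝ) := by ring
        _ ≤ _ := this
    have hhigh : ∀ᶠ n in atTop,
        (((f n - 2 : ℕ)) : ℝ) * (m n : ℝ) ^ ((1:ℝ)/3) / (n0 n : ℝ)
          ≤ (f n : ℝ) * (m n : ℝ) ^ ((1:ℝ)/3) / (n0 n : ℝ) := by
      filter_upwards with n
      have h1 : (((f n - 2 : ℕ)) : ℝ) ≤ (f n : ℝ) := by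
        exact_mod_cast Nat.sub_le (f n) 2
      have hx : (0:ℝ) ≤ (m n : ℝ) ^ ((1:ℝ)/3) := Real.rpow_nonneg (Nat.cast_nonneg _) _
      gcongr
    have hLlim : Tendsto (fun n => (f n : ℝ) * (m n : ℝ) ^ ((1:ℝ)/3) / (n0 n : ℝ)
        - 2 * ((m n : ℝ) ^ ((1:ℝ)/3) / (n0 n : ℝ))) atTop (𝓝 γ) := by
      have := hγ.sub (h13.const_mul 2)
      simpa using this
    exact tendsto_of_tendsto_of_tendsto_of_le_of_le' hLlim hγ hlow hhigh
  -- upper inner limit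
  have ha' : Tendsto (fun n => (f n : ℝ) * (m n : ℝ) ^ ((1:ℝ)/3) / (((n0 n - 2 : ℕ)) : ℝ))
      atTop (𝓝 γ) := by
    have hr : Tendsto (fun n => (n0 n : ℝ) / ((n0 n : ℝ) - 2)) atTop (𝓝 1) := by
      have hsub : Tendsto (fun n => (n0 n : ℝ) - 2) atTop atTop :=
        tendsto_atTop_add_const_right _ (-2) hnr
      have h0 : Tendsto (fun n => 2 / ((n0 n : ℝ) - 2)) atTop (𝓝 0) :=
        tendsto_const_nhds.div_atTop hsub
      have heq : ∀ᶠ n in atTop, 1 + 2 / ((n0 n : ℝ) - 2) = (n0 n : ℝ) / ((n0 n : ℝ) - 2) := by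
        filter_upwards [hn0.eventually_ge_atTop 3] with n hn3
        have h3' : (3:ℝ) ≤ (n0 n : ℝ) := by exact_mod_cast hn3
        have hne2 : (n0 n : ℝ) - 2 ≠ 0 := by linarith
        field_simp
        ring
      have := (tendsto_const_nhds (x := (1:ℝ))).add h0
      rw [show (1:ℝ) + 0 = 1 by norm_num] at this
      exact Tendsto.congr' heq this
    have heq : ∀ᶠ n in atTop,
        ((f n : ℝ) * (m n : ℝ) ^ ((1:ℝ)/3) / (n0 n : ℝ)) * ((n0 n : ℝ) / ((n0 n : ℝ) - 2))
          = (f n : ℝ) * (m n : ℝ) ^ ((1:ℝ)/3) / (((n0 n - 2 : ℕ)) : ℝ) := by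
      filter_upwards [hn0.eventually_ge_atTop 3] with n hn3
      have h3 : (3:ℝ) ≤ (n0 n : ℝ) := by exact_mod_cast hn3
      have hc : (((n0 n - 2 : ℕ)) : ℝ) = (n0 n : ℝ) - 2 := by
        rw [Nat.cast_sub (by omega)]; norm_num
      rw [hc]
      have hne : (n0 n : ℝ) ≠ 0 := by linarith
      have hne2 : (n0 n : ℝ) - 2 ≠ 0 := by linarith
      field_simp
    have := hγ.mul hr
    rw [mul_one] at this
    exact Tendsto.congr' heq this
  -- the key limit: m * b → (γ/2)^3
  have hmb : Tendsto (fun n => (m n : ℝ) * b n) atTop (𝓝 ((γ/2)^3)) := by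
    have hγ38 : ((γ:ℝ)/2)^3 = γ^3/8 := by ring
    rw [hγ38]
    have hLlim : Tendsto (fun n =>
        ((((f n - 2 : ℕ)) : ℝ) * (m n : ℝ) ^ ((1:ℝ)/3) / (n0 n : ℝ))^3 / 8) atTop (𝓝 (γ^3/8)) :=
      (ha.pow 3).div_const 8
    have hUlim : Tendsto (fun n =>
        ((f n : ℝ) * (m n : ℝ) ^ ((1:ℝ)/3) / (((n0 n - 2 : ℕ)) : ℝ))^3 / 8) atTop (𝓝 (γ^3/8)) :=
      (ha'.pow 3).div_const 8
    have hm3 : ∀ n, ((m n : ℝ) ^ ((1:ℝ)/3)) ^ (3:ℕ) = (m n : ℝ) := by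
      intro n
      rw [← Real.rpow_natCast ((m n : ℝ) ^ ((1:ℝ)/3)) 3, ← Real.rpow_mul (Nat.cast_nonneg _)]
      norm_num
    have hlow : ∀ᶠ n in atTop,
        ((((f n - 2 : ℕ)) : ℝ) * (m n : ℝ) ^ ((1:ℝ)/3) / (n0 n : ℝ))^3 / 8
          ≤ (m n : ℝ) * b n := by
      filter_upwards [hn0.eventually_ge_atTop 3] with n hn3
      have hdescpos : 0 < (n0 n).descFactorial 3 :=
        Nat.pos_of_ne_zero (by
          rw [Ne, Nat.descFactorial_eq_zero_iff_lt]; omega)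
      have hkey : ((((f n - 2 : ℕ)) : ℝ))^3 * (m n : ℝ) / (8 * ((n0 n : ℝ))^3)
          ≤ ((m n : ℝ) * (B n : ℝ)) / (8 * ((n0 n).descFactorial 3 : ℝ)) := by
        apply div_le_div₀ (by positivity)
        · have h1 : (((f n - 2 : ℕ)) : ℝ)^3 ≤ (B n : ℝ) := by
            have := Nat.pow_sub_le_descFactorial (f n) 3
            have h2 : (f n + 1 - 3) = f n - 2 := by omega
            rw [h2] at this
            calc (((f n - 2 : ℕ)) : ℝ)^3 = (((f n - 2)^3 : ℕ) : ℝ) := by push_cast; ring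
              _ ≤ (B n : ℝ) := by exact_mod_cast this
          calc ((((f n - 2 : ℕ)) : ℝ))^3 * (m n : ℝ) ≤ (B n : ℝ) * (m n : ℝ) := by
                apply mul_le_mul_of_nonneg_right h1 (Nat.cast_nonneg _)
            _ = (m n : ℝ) * (B n : ℝ) := by ring
        · positivity
        · have : ((n0 n).descFactorial 3 : ℝ) ≤ ((n0 n : ℝ))^3 := by
            calc ((n0 n).descFactorial 3 : ℝ) ≤ (((n0 n)^3 : ℕ) : ℝ) := by
                  exact_mod_cast Nat.descFactorial_le_pow _ _
              _ = ((n0 n : ℝ))^3 := by push_cast; ring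
          linarith
      calc ((((f n - 2 : ℕ)) : ℝ) * (m n : ℝ) ^ ((1:ℝ)/3) / (n0 n : ℝ))^3 / 8
          = ((((f n - 2 : ℕ)) : ℝ))^3 * (m n : ℝ) / (8 * ((n0 n : ℝ))^3) := by
            rw [div_pow, mul_pow, hm3]; ring
        _ ≤ ((m n : ℝ) * (B n : ℝ)) / (8 * ((n0 n).descFactorial 3 : ℝ)) := hkey
        _ = (m n : ℝ) * b n := by
            rw [hbdef]
            simp only [hN]
            push_cast
            ring
    have hhigh : ∀ᶠ n in atTop,
        (m n : ℝ) * b n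
          ≤ ((f n : ℝ) * (m n : ℝ) ^ ((1:ℝ)/3) / (((n0 n - 2 : ℕ)) : ℝ))^3 / 8 := by
      filter_upwards [hn0.eventually_ge_atTop 3] with n hn3
      have hn2pos : 0 < n0 n - 2 := by omega
      have hn2posR : (0:ℝ) < (((n0 n - 2 : ℕ)) : ℝ) := by exact_mod_cast hn2pos
      have hkey : ((m n : ℝ) * (B n : ℝ)) / (8 * ((n0 n).descFactorial 3 : ℝ))
          ≤ ((f n : ℝ))^3 * (m n : ℝ) / (8 * ((((n0 n - 2 : ℕ)) : ℝ))^3) := by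
        apply div_le_div₀ (by positivity)
        · have h1 : (B n : ℝ) ≤ ((f n : ℝ))^3 := by
            calc (B n : ℝ) ≤ (((f n)^3 : ℕ) : ℝ) := by
                  exact_mod_cast Nat.descFactorial_le_pow _ _
              _ = ((f n : ℝ))^3 := by push_cast; ring
          calc (m n : ℝ) * (B n : ℝ) ≤ (m n : ℝ) * ((f n : ℝ))^3 := by
                apply mul_le_mul_of_nonneg_left h1 (Nat.cast_nonneg _)
            _ = ((f n : ℝ))^3 * (m n : ℝ) := by ring
        · positivity
        · have h2 : ((n0 n - 2)^3 : ℕ) ≤ (n0 n).descFactorial 3 := by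
            have := Nat.pow_sub_le_descFactorial (n0 n) 3
            have heq2 : (n0 n + 1 - 3) = n0 n - 2 := by omega
            rwa [heq2] at this
          calc 8 * ((((n0 n - 2 : ℕ)) : ℝ))^3 = 8 * ((((n0 n - 2)^3 : ℕ)) : ℝ) := by
                push_cast; ring
            _ ≤ 8 * (((n0 n).descFactorial 3 : ℕ) : ℝ) := by
                have : ((((n0 n - 2)^3 : ℕ)) : ℝ) ≤ (((n0 n).descFactorial 3 : ℕ) : ℝ) := by
                  exact_mod_cast h2
                linarith
      calc (m n : ℝ) * b n = ((m n : ℝ) * (B n : ℝ)) / (8 * ((n0 n).descFactorial 3 : ℝ)) := by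
            rw [hbdef]
            simp only [hN]
            push_cast
            ring
        _ ≤ ((f n : ℝ))^3 * (m n : ℝ) / (8 * ((((n0 n - 2 : ℕ)) : ℝ))^3) := hkey
        _ = ((f n : ℝ) * (m n : ℝ) ^ ((1:ℝ)/3) / (((n0 n - 2 : ℕ)) : ℝ))^3 / 8 := by
            rw [div_pow, mul_pow, hm3]; ring
    exact tendsto_of_tendsto_of_tendsto_of_le_of_le' hLlim hUlim hlow hhigh
  -- b → 0
  have hb0 : Tendsto b atTop (𝓝 0) := by
    have heq : ∀ᶠ n in atTop, ((m n : ℝ) * b n) / (m n : ℝ) = b n := by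
      filter_upwards [hm.eventually_ge_atTop 1] with n hm1
      have : (m n : ℝ) ≠ 0 := by
        have : (0:ℝ) < (m n : ℝ) := by exact_mod_cast hm1
        linarith
      field_simp
    exact Tendsto.congr' heq (hmb.div_atTop hmr)
  -- eventual equality of prob with (1 - b)^m
  have hprobeq : ∀ᶠ n in atTop,
      (1 - b n) ^ (m n) = prob {φ : CNF (n0 n) (m n) 3 |
        ∀ j, ¬ (∀ i : Fin 3, -(lit (φ j) i) ∈ L n)} := by
    filter_upwards [hn0.eventually_ge_atTop 3] with n hn3
    have hdescpos : 0 < (n0 n).descFactorial 3 :=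
      Nat.pos_of_ne_zero (by rw [Ne, Nat.descFactorial_eq_zero_iff_lt]; omega)
    have hNpos : 0 < N n := by simp only [hN]; positivity
    have hBN : B n ≤ N n := by
      simp only [hB, hN]
      calc (f n).descFactorial 3 ≤ (n0 n).descFactorial 3 :=
            Nat.descFactorial_le _ (hfle n)
        _ ≤ 8 * (n0 n).descFactorial 3 := by omega
    have hcard : Nat.card {φ : CNF (n0 n) (m n) 3 |
        ∀ j, ¬ (∀ i : Fin 3, -(lit (φ j) i) ∈ L n)} = (N n - B n) ^ (m n) := by
      rw [card_good (n0 n) (m n) 3 (L n) (hLsub n) (hLcons n), hLcard n]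
      norm_num [hN, hB]
    have hΩ : Fintype.card (CNF (n0 n) (m n) 3) = (N n) ^ (m n) := by
      rw [Fintype.card_fun, Fintype.card_fin, card_clauseData]
      norm_num [hN]
    rw [prob, hcard, hΩ]
    have hNR : (0:ℝ) < (N n : ℝ) := by exact_mod_cast hNpos
    rw [Nat.cast_pow, Nat.cast_pow, ← div_pow, Nat.cast_sub hBN]
    congr 1
    field_simp [hbdef]
    simp only [hbdef]
    rw [sub_mul, div_mul_cancel₀ _ hNR.ne', one_mul]
  have hfinal := tendsto_one_sub_pow b m ((γ/2)^3) hb0 hmb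
  have : Tendsto (fun n => prob {φ : CNF (n0 n) (m n) 3 |
      ∀ j, ¬ (∀ i : Fin 3, -(lit (φ j) i) ∈ L n)}) atTop (𝓝 (Real.exp (-((γ/2)^3)))) :=
    Tendsto.congr' hprobeq hfinal
  simpa using this


end RandomSAT
end
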